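/- Let σ_ξ > 0 and σ_η > 0 and set q = 3 σ_ξ². Define φ: (0,∞) → ℝ by φ(u) = 6 (σ_ξ²/σ_η²) u^{−2} − 2 e^{−σ_η u/σ_ξ} ( 1 + 3 σ_ξ/(σ_η u) + 3 σ_ξ²/(σ_η² u²) ). Then φ is twice differentiable on (0,∞), satisfies the modified-Bessel-type ODE u² φ''(u) − ( (σ_η²/σ_ξ²) u² + 2q/σ_ξ² ) φ(u) = −2q/σ_ξ² (i.e. u² φ''(u) − ((σ_η²/σ_ξ²) u² + 6) φ(u) = −6) for all u > 0, is bounded on (0,∞), and lim_{u↓0} φ(u) = 1. -/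

import Mathlib

open MeasureTheory Set Filter

noncomputable section

/-- the characteristic function of the killed exponential functional for two
independent Brownian motions with `q = 3 σξ²`, on `(0,∞)` -/
def phiBM (σξ ση : ℝ) (u : ℝ) : ℝ :=
  6 * (σξ ^ 2 / ση ^ 2) / u ^ 2
    - 2 * Real.exp (-(ση * u / σξ)) * (1 + 3 * σξ / (ση * u) + 3 * σξ ^ 2 / (ση ^ 2 * u ^ 2))

/-- auxiliary numerator function -/
def auxH (t : ℝ) : ℝ := 6 - 2 * Real.exp (-t) * (t ^ 2 + 3 * t + 3)

/-- rescaled version of `phiBM` -/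
def auxPsi (t : ℝ) : ℝ := auxH t / t ^ 2

def auxPsi1 (t : ℝ) : ℝ :=
  (2 * Real.exp (-t) * (t ^ 4 + 3 * t ^ 3 + 6 * t ^ 2 + 6 * t) - 12 * t) / t ^ 4

def auxPsi2 (t : ℝ) : ℝ :=
  (36 - 2 * Real.exp (-t) * (t ^ 4 + 3 * t ^ 3 + 9 * t ^ 2 + 18 * t + 18)) / t ^ 4

lemma hasDerivAt_auxH (t : ℝ) :
    HasDerivAt auxH (2 * Real.exp (-t) * (t ^ 2 + t)) t := by
  have he : HasDerivAt (fun s : ℝ => Real.exp (-s)) (-Real.exp (-t)) t := by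
    simpa using ((hasDerivAt_id t).neg.exp)
  have hp : HasDerivAt (fun s : ℝ => s ^ 2 + 3 * s + 3) (2 * t + 3) t := by
    have h1 : HasDerivAt (fun s : ℝ => s ^ 2) (2 * t) t := by
      simpa using hasDerivAt_pow 2 t
    have h2 : HasDerivAt (fun s : ℝ => 3 * s) 3 t := by
      simpa using (hasDerivAt_id t).const_mul 3
    simpa using (h1.add h2).add_const 3
  have h := ((he.mul hp).const_mul 2).const_sub 6
  have hfun : auxH = fun x => 6 - 2 * (Real.exp (-x) * (x ^ 2 + 3 * x + 3)) := by
    funext x; rw [auxH]; ring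
  rw [hfun]
  refine h.congr_deriv ?_
  ring

lemma hasDerivAt_auxPsi {t : ℝ} (ht : t ≠ 0) : HasDerivAt auxPsi (auxPsi1 t) t := by
  have := (hasDerivAt_auxH t).div (hasDerivAt_pow 2 t) (pow_ne_zero 2 ht)
  refine this.congr_deriv ?_
  unfold auxH auxPsi1
  field_simp
  ring

lemma hasDerivAt_auxPsi1 {t : ℝ} (ht : t ≠ 0) : HasDerivAt auxPsi1 (auxPsi2 t) t := by
  have he : HasDerivAt (fun s : ℝ => Real.exp (-s)) (-Real.exp (-t)) t := by
    simpa using ((hasDerivAt_id t).neg.exp)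
  have hp : HasDerivAt (fun s : ℝ => s ^ 4 + 3 * s ^ 3 + 6 * s ^ 2 + 6 * s)
      (4 * t ^ 3 + 9 * t ^ 2 + 12 * t + 6) t := by
    have h1 : HasDerivAt (fun s : ℝ => s ^ 4) (4 * t ^ 3) t := by
      simpa using hasDerivAt_pow 4 t
    have h2 : HasDerivAt (fun s : ℝ => 3 * s ^ 3) (9 * t ^ 2) t := by
      have := (hasDerivAt_pow 3 t).const_mul 3
      exact this.congr_deriv (by ring)
    have h3 : HasDerivAt (fun s : ℝ => 6 * s ^ 2) (12 * t) t := by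
      have := (hasDerivAt_pow 2 t).const_mul 6
      exact this.congr_deriv (by ring)
    have h4 : HasDerivAt (fun s : ℝ => 6 * s) 6 t := by
      simpa using (hasDerivAt_id t).const_mul 6
    exact ((h1.add h2).add h3).add h4
  have hN : HasDerivAt
      (fun s : ℝ => 2 * Real.exp (-s) * (s ^ 4 + 3 * s ^ 3 + 6 * s ^ 2 + 6 * s) - 12 * s)
      (2 * Real.exp (-t) * (-t ^ 4 + t ^ 3 + 3 * t ^ 2 + 6 * t + 6) - 12) t := by
    have h12 : HasDerivAt (fun s : ℝ => 12 * s) 12 t := by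
      simpa using (hasDerivAt_id t).const_mul 12
    have h := ((he.mul hp).const_mul 2).sub h12
    have hfun : (fun s : ℝ => 2 * Real.exp (-s) * (s ^ 4 + 3 * s ^ 3 + 6 * s ^ 2 + 6 * s) - 12 * s)
        = fun x => 2 * (Real.exp (-x) * (x ^ 4 + 3 * x ^ 3 + 6 * x ^ 2 + 6 * x)) - 12 * x := by
      funext x; ring
    rw [hfun]
    refine h.congr_deriv ?_
    ring
  have := hN.div (hasDerivAt_pow 4 t) (pow_ne_zero 4 ht)
  refine this.congr_deriv ?_
  unfold auxPsi2
  field_simp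
  ring

lemma auxH_deriv_nonneg :
    ∀ t ∈ Set.Ici (0 : ℝ), 0 ≤ 2 * Real.exp (-t) * (t ^ 2 + t) := by
  intro t ht
  have := Real.exp_pos (-t)
  nlinarith [ht.out]

/-- generic monotonicity helper -/
lemma auxMono (f f' : ℝ → ℝ) (hf : ∀ t, HasDerivAt f (f' t) t)
    (h0 : ∀ t, 0 ≤ t → 0 ≤ f' t) : ∀ t, 0 ≤ t → f 0 ≤ f t := by
  intro t ht
  have hmono : MonotoneOn f (Set.Ici (0 : ℝ)) := by
    apply monotoneOn_of_deriv_nonneg (convex_Ici 0)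
    · exact fun s _ => (hf s).continuousAt.continuousWithinAt
    · intro s hs
      exact (hf s).differentiableAt.differentiableWithinAt
    · intro s hs
      rw [(hf s).deriv]
      exact h0 s (le_of_lt (by simpa using hs))
  exact hmono (Set.self_mem_Ici) ht ht

lemma auxH_nonneg {t : ℝ} (ht : 0 ≤ t) : 0 ≤ auxH t := by
  have h0 : auxH 0 = 0 := by simp [auxH]; norm_num
  have := auxMono auxH (fun t => 2 * Real.exp (-t) * (t ^ 2 + t)) hasDerivAt_auxH
    (fun t ht => auxH_deriv_nonneg t ht) t ht
  linarith [h0 ▸ this]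

lemma auxH_le {t : ℝ} (ht : 0 ≤ t) : auxH t ≤ t ^ 2 := by
  have key := auxMono (fun t => t ^ 2 - auxH t)
    (fun t => 2 * t - 2 * Real.exp (-t) * (t ^ 2 + t))
    (fun t => by
      have h1 : HasDerivAt (fun s : ℝ => s ^ 2) (2 * t) t := by
        simpa using hasDerivAt_pow 2 t
      exact h1.sub (hasDerivAt_auxH t))
    (fun t ht => by
      show (0:ℝ) ≤ 2 * t - 2 * Real.exp (-t) * (t ^ 2 + t)
      have h1 := Real.add_one_le_exp t
      have h2 : Real.exp (-t) * Real.exp t = 1 := by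
        rw [← Real.exp_add]; simp
      have h3 := Real.exp_pos t
      have h4 := Real.exp_pos (-t)
      nlinarith [mul_le_mul_of_nonneg_left h1 h4.le, mul_nonneg ht h4.le]) t ht
  simp only [auxH] at key ⊢
  norm_num at key
  nlinarith [key]

lemma auxH_ge {t : ℝ} (ht : 0 ≤ t) : t ^ 2 - t ^ 4 / 2 ≤ auxH t := by
  have key := auxMono (fun t => auxH t - t ^ 2 + t ^ 4 / 2)
    (fun t => 2 * Real.exp (-t) * (t ^ 2 + t) - 2 * t + 2 * t ^ 3)
    (fun t => by
      have h1 : HasDerivAt (fun s : ℝ => s ^ 2) (2 * t) t := by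
        simpa using hasDerivAt_pow 2 t
      have h2 : HasDerivAt (fun s : ℝ => s ^ 4 / 2) (2 * t ^ 3) t := by
        have := (hasDerivAt_pow 4 t).div_const 2
        exact this.congr_deriv (by ring)
      exact ((hasDerivAt_auxH t).sub h1).add h2)
    (fun t ht => by
      show (0:ℝ) ≤ 2 * Real.exp (-t) * (t ^ 2 + t) - 2 * t + 2 * t ^ 3
      have h1 := Real.add_one_le_exp (-t)
      have h4 := Real.exp_pos (-t)
      nlinarith [mul_le_mul_of_nonneg_right h1 (by linarith : (0:ℝ) ≤ t + 1),
        mul_nonneg ht (sq_nonneg t)]) t ht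
  simp only [auxH] at key ⊢
  norm_num at key
  nlinarith [key]

lemma auxPsi_nonneg {t : ℝ} (ht : 0 < t) : 0 ≤ auxPsi t :=
  div_nonneg (auxH_nonneg ht.le) (by positivity)

lemma auxPsi_le_one {t : ℝ} (ht : 0 < t) : auxPsi t ≤ 1 := by
  rw [auxPsi, div_le_one (by positivity)]
  simpa using auxH_le ht.le

lemma auxPsi_ge {t : ℝ} (ht : 0 < t) : 1 - t ^ 2 / 2 ≤ auxPsi t := by
  rw [auxPsi, le_div_iff₀ (by positivity : (0:ℝ) < t ^ 2)]
  have := auxH_ge ht.le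
  nlinarith

lemma auxPsi_ode {t : ℝ} (ht : t ≠ 0) :
    t ^ 2 * auxPsi2 t - (t ^ 2 + 6) * auxPsi t = -6 := by
  unfold auxPsi2 auxPsi auxH
  field_simp
  ring

theorem stmt17 (σξ ση q : ℝ) (hσξ : 0 < σξ) (hση : 0 < ση) (hq : q = 3 * σξ ^ 2) :
    (∀ u : ℝ, 0 < u →
      DifferentiableAt ℝ (phiBM σξ ση) u ∧ DifferentiableAt ℝ (deriv (phiBM σξ ση)) u) ∧
    (∀ u : ℝ, 0 < u →
      u ^ 2 * deriv (deriv (phiBM σξ ση)) u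
          - ((ση ^ 2 / σξ ^ 2) * u ^ 2 + 2 * q / σξ ^ 2) * phiBM σξ ση u
        = -(2 * q / σξ ^ 2)) ∧
    (∃ C : ℝ, ∀ u : ℝ, 0 < u → |phiBM σξ ση u| ≤ C) ∧
    Filter.Tendsto (phiBM σξ ση) (nhdsWithin 0 (Ioi 0)) (nhds 1) := by
  set a : ℝ := ση / σξ with ha_def
  have ha : 0 < a := div_pos hση hσξ
  -- key identity on (0,∞)
  have key : ∀ u : ℝ, 0 < u → phiBM σξ ση u = auxPsi (a * u) := by
    intro u hu
    have harg : -(ση * u / σξ) = -(a * u) := by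
      rw [ha_def]; ring
    rw [phiBM, auxPsi, auxH, harg]
    rw [ha_def]
    field_simp
  -- first derivative
  have hphi : ∀ u : ℝ, 0 < u → HasDerivAt (phiBM σξ ση) (auxPsi1 (a * u) * a) u := by
    intro u hu
    have hin : HasDerivAt (fun v : ℝ => a * v) a u := by
      simpa using (hasDerivAt_id u).const_mul a
    have hcomp : HasDerivAt (fun v => auxPsi (a * v)) (auxPsi1 (a * u) * a) u :=
      HasDerivAt.comp u (hasDerivAt_auxPsi (ne_of_gt (mul_pos ha hu))) hin
    have hev : (fun v => auxPsi (a * v)) =ᶠ[nhds u] phiBM σξ ση := by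
      filter_upwards [Ioi_mem_nhds hu] with v hv
      exact (key v hv).symm
    exact hcomp.congr_of_eventuallyEq hev.symm
  have hderiv : ∀ u : ℝ, 0 < u → deriv (phiBM σξ ση) u = auxPsi1 (a * u) * a :=
    fun u hu => (hphi u hu).deriv
  -- second derivative
  have hphi2 : ∀ u : ℝ, 0 < u →
      HasDerivAt (deriv (phiBM σξ ση)) (auxPsi2 (a * u) * a * a) u := by
    intro u hu
    have hin : HasDerivAt (fun v : ℝ => a * v) a u := by
      simpa using (hasDerivAt_id u).const_mul a
    have hcomp : HasDerivAt (fun v => auxPsi1 (a * v) * a) (auxPsi2 (a * u) * a * a) u := by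
      have := (HasDerivAt.comp u (hasDerivAt_auxPsi1 (ne_of_gt (mul_pos ha hu))) hin).mul_const a
      exact this
    have hev : (fun v => auxPsi1 (a * v) * a) =ᶠ[nhds u] deriv (phiBM σξ ση) := by
      filter_upwards [Ioi_mem_nhds hu] with v hv
      exact (hderiv v hv).symm
    exact hcomp.congr_of_eventuallyEq hev.symm
  refine ⟨fun u hu => ⟨(hphi u hu).differentiableAt, (hphi2 u hu).differentiableAt⟩, ?_, ?_, ?_⟩
  · -- ODE
    intro u hu
    have ht : (0:ℝ) < a * u := mul_pos ha hu
    rw [(hphi2 u hu).deriv, key u hu]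
    have hode := auxPsi_ode (ne_of_gt ht)
    have hq6 : 2 * q / σξ ^ 2 = 6 := by
      rw [hq]; field_simp; ring
    have haa : (ση ^ 2 / σξ ^ 2) * u ^ 2 = (a * u) ^ 2 := by
      rw [ha_def]; field_simp
    rw [hq6, haa]
    have : u ^ 2 * (auxPsi2 (a * u) * a * a) = (a * u) ^ 2 * auxPsi2 (a * u) := by ring
    rw [this]
    linarith [hode]
  · -- boundedness
    refine ⟨1, fun u hu => ?_⟩
    rw [key u hu]
    have ht : (0:ℝ) < a * u := mul_pos ha hu
    rw [abs_le]
    exact ⟨by linarith [auxPsi_nonneg ht], auxPsi_le_one ht⟩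
  · -- limit
    have hlow : Tendsto (fun u : ℝ => 1 - (a * u) ^ 2 / 2) (nhdsWithin 0 (Ioi 0)) (nhds 1) := by
      have hc : Continuous (fun u : ℝ => 1 - (a * u) ^ 2 / 2) := by continuity
      have := (hc.tendsto 0).mono_left
        (nhdsWithin_le_nhds : nhdsWithin (0:ℝ) (Ioi 0) ≤ nhds 0)
      simpa using this
    have hhigh : Tendsto (fun _ : ℝ => (1:ℝ)) (nhdsWithin (0:ℝ) (Ioi 0)) (nhds 1) :=
      tendsto_const_nhds
    refine tendsto_of_tendsto_of_tendsto_of_le_of_le' hlow hhigh ?_ ?_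
    · filter_upwards [self_mem_nhdsWithin] with u hu
      rw [key u hu]
      exact auxPsi_ge (mul_pos ha hu)
    · filter_upwards [self_mem_nhdsWithin] with u hu
      rw [key u hu]
      exact auxPsi_le_one (mul_pos ha hu)

end
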